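/- If a randomized algorithm A is (ε,δ)-DP, then for any two adjacent datasets D ~ D′: E[ (1 − e^{ε − |PLRV_{D,D′}^A(A(D))|})_+ ] ≤ (1 + e^{−ε}) δ. -/

import Mathlib

open MeasureTheory ProbabilityTheory

noncomputable section

/-- Add/remove adjacency on datasets (multisets of data points). -/
def AddRemoveAdj {𝒳 : Type*} (D D' : Multiset 𝒳) : Prop :=
  ∃ x, D' = x ::ₘ D ∨ D = x ::ₘ D'

/-- Replace adjacency on membership-bit vectors. -/
def ReplaceAdj {m : ℕ} (s s' : Fin m → ℤ) : Prop :=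
  ∃ i, (∀ j, j ≠ i → s j = s' j) ∧ s i ≠ s' i

/-- `(ε,δ)`-differential privacy of a family of output measures w.r.t. an adjacency
relation. -/
def ApproxDP {I Z : Type*} [MeasurableSpace Z] (M : I → Measure Z)
    (adj : I → I → Prop) (ε δ : ℝ) : Prop :=
  ∀ D D', adj D D' → ∀ E : Set Z, MeasurableSet E →
    M D E ≤ ENNReal.ofReal (Real.exp ε) * M D' E + ENNReal.ofReal δ

/-- Pure `ε`-DP. -/
def PureDP {I Z : Type*} [MeasurableSpace Z] (M : I → Measure Z)
    (adj : I → I → Prop) (ε : ℝ) : Prop :=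
  ApproxDP M adj ε 0

/-- The trade-off function `T_{P,Q}(α) = inf {E_Q[φ] : φ measurable into {0,1}, E_P[φ] ≤ α}`
(tests `φ` are indicators of measurable sets). -/
def tradeoff {Z : Type*} [MeasurableSpace Z] (P Q : Measure Z) (α : ℝ) : ℝ :=
  sInf {β : ℝ | ∃ E : Set Z, MeasurableSet E ∧ (P E).toReal ≤ α ∧ β = (Q E).toReal}

/-- `f`-differential privacy. -/
def FDP {I Z : Type*} [MeasurableSpace Z] (M : I → Measure Z)
    (adj : I → I → Prop) (f : ℝ → ℝ) : Prop :=
  ∀ D D', adj D D' → ∀ α ∈ Set.Icc (0:ℝ) 1, f α ≤ tradeoff (M D) (M D') α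

/-- The distribution-shift mechanism: coordinate `i` is drawn from `P1` if `s i = 1`
and from `P0` otherwise. -/
def MDS {𝒳 : Type*} [MeasurableSpace 𝒳] (P1 P0 : Measure 𝒳)
    [IsProbabilityMeasure P1] [IsProbabilityMeasure P0] {m : ℕ} (s : Fin m → ℤ) :
    Measure (Fin m → 𝒳) :=
  haveI : ∀ i : Fin m, SigmaFinite (if s i = 1 then P1 else P0) := fun i => by
    split <;> infer_instance
  Measure.pi (fun i => if s i = 1 then P1 else P0)

/-- The training set `D ∪ {x_i : s_i = 1}`. -/
def trainOf {𝒳 : Type*} {m : ℕ} (D : Multiset 𝒳) (x : Fin m → 𝒳) (s : Fin m → ℤ) :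
    Multiset 𝒳 :=
  D + (Finset.univ : Finset (Fin m)).val.filterMap
    (fun i => if s i = 1 then some (x i) else none)

/-- The total mechanism `M_Tot(s) = (M_DS(s), M_A(M_DS(s), s))`. -/
def MTot {𝒳 Θ : Type*} [MeasurableSpace 𝒳] [MeasurableSpace Θ]
    (P1 P0 : Measure 𝒳) [IsProbabilityMeasure P1] [IsProbabilityMeasure P0]
    (A : Multiset 𝒳 → Measure Θ) (D : Multiset 𝒳) {m : ℕ} (s : Fin m → ℤ) :
    Measure ((Fin m → 𝒳) × Θ) :=
  (MDS P1 P0 s).bind (fun x => (A (trainOf D x s)).map (fun t => (x, t)))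

/-- The privacy loss random variable
`PLRV_{D,D'}^A(θ) = log(dP_{A(D)}/dP_{A(D')}(θ))`. -/
def PLRV {𝒳 Θ : Type*} [MeasurableSpace Θ] (A : Multiset 𝒳 → Measure Θ)
    (D D' : Multiset 𝒳) (t : Θ) : ℝ :=
  Real.log (((A D).rnDeriv (A D')) t).toReal
section PLRVAux

open ENNReal

private lemma plrv_ofReal_max0 (x : ℝ) : ENNReal.ofReal (max 0 x) = ENNReal.ofReal x := by
  rcases le_total x 0 with h | h
  · rw [max_eq_left h, ENNReal.ofReal_of_nonpos h, ENNReal.ofReal_zero]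
  · rw [max_eq_right h]

private lemma plrv_real1 (ε r : ℝ) (hε : 0 ≤ ε) (hr : 0 ≤ r) :
    max 0 (1 - Real.exp (ε - Real.log r)) * r = max 0 (r - Real.exp ε) := by
  rcases hr.lt_or_eq with h0 | h0
  · rw [Real.exp_sub, Real.exp_log h0]
    rcases le_or_gt r (Real.exp ε) with h | h
    · have h1 : (1:ℝ) ≤ Real.exp ε / r := (one_le_div h0).mpr h
      rw [max_eq_left (by linarith), max_eq_left (by linarith), zero_mul]
    · have h2 : Real.exp ε / r < 1 := (div_lt_one h0).mpr h
      rw [max_eq_right (by linarith), max_eq_right (by linarith)]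
      field_simp
  · rw [← h0, mul_zero]
    have : 0 - Real.exp ε ≤ 0 := by linarith [Real.exp_pos ε]
    rw [max_eq_left this]

private lemma plrv_real2 (ε r : ℝ) (hε : 0 ≤ ε) (hr : 0 ≤ r) :
    max 0 (1 - Real.exp (ε + Real.log r)) * r
      ≤ Real.exp (-ε) * max 0 (1 - Real.exp ε * r) := by
  rcases hr.lt_or_eq with h0 | h0
  · rw [Real.exp_add, Real.exp_log h0]
    rcases le_or_gt 1 (Real.exp ε * r) with h | h
    · rw [max_eq_left (by linarith)]
      rw [zero_mul, mul_zero]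
    · have hprod : Real.exp (-ε) * Real.exp ε = 1 := by
        rw [← Real.exp_add]; simp
      have hre : r ≤ Real.exp (-ε) := by
        nlinarith [Real.exp_pos ε, Real.exp_pos (-ε)]
      rw [max_eq_right (by linarith)]
      nlinarith [mul_nonneg (sub_nonneg.mpr hre)
        (by linarith : (0:ℝ) ≤ 1 - Real.exp ε * r)]
  · rw [← h0, mul_zero]
    positivity

private lemma plrv_hockey_aux {Θ : Type*} [MeasurableSpace Θ]
    (P Q : MeasureTheory.Measure Θ) [MeasureTheory.IsProbabilityMeasure P]
    [MeasureTheory.IsProbabilityMeasure Q] (ε δ : ℝ) (hε : 0 < ε) (hδ : 0 ≤ δ)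
    (H1 : ∀ E : Set Θ, MeasurableSet E →
      P E ≤ ENNReal.ofReal (Real.exp ε) * Q E + ENNReal.ofReal δ)
    (H2 : ∀ E : Set Θ, MeasurableSet E →
      Q E ≤ ENNReal.ofReal (Real.exp ε) * P E + ENNReal.ofReal δ) :
    (∫ t, max 0 (1 - Real.exp (ε - |Real.log ((P.rnDeriv Q) t).toReal|)) ∂P)
      ≤ (1 + Real.exp (-ε)) * δ := by
  classical
  set f : Θ → ℝ≥0∞ := P.rnDeriv Q with hfdef
  have hfm : Measurable f := MeasureTheory.Measure.measurable_rnDeriv P Q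
  set c : ℝ≥0∞ := ENNReal.ofReal (Real.exp ε) with hcdef
  have hc_ne_top : c ≠ ∞ := ENNReal.ofReal_ne_top
  have hεnn : (0:ℝ) ≤ ε := hε.le
  have hLm : Measurable fun t => Real.log (f t).toReal := hfm.ennreal_toReal.log
  -- the three integrands
  have hgm : Measurable fun t => max 0 (1 - Real.exp (ε - |Real.log (f t).toReal|)) :=
    measurable_const.max (((hLm.abs.const_sub ε).exp).const_sub 1)
  have hg1m : Measurable fun t => max 0 (1 - Real.exp (ε - Real.log (f t).toReal)) :=
    measurable_const.max (((hLm.const_sub ε).exp).const_sub 1)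
  have hg2m : Measurable fun t => max 0 (1 - Real.exp (ε + Real.log (f t).toReal)) :=
    measurable_const.max (((hLm.const_add ε).exp).const_sub 1)
  have hg_nonneg : ∀ t : Θ, (0:ℝ) ≤ max 0 (1 - Real.exp (ε - |Real.log (f t).toReal|)) :=
    fun t => le_max_left _ _
  have hg_le_one : ∀ t : Θ, max 0 (1 - Real.exp (ε - |Real.log (f t).toReal|)) ≤ 1 :=
    fun t => max_le zero_le_one (by linarith [Real.exp_pos (ε - |Real.log (f t).toReal|)])
  have hg_split : ∀ t : Θ, max 0 (1 - Real.exp (ε - |Real.log (f t).toReal|))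
      ≤ max 0 (1 - Real.exp (ε - Real.log (f t).toReal))
        + max 0 (1 - Real.exp (ε + Real.log (f t).toReal)) := by
    intro t
    rcases abs_cases (Real.log (f t).toReal) with ⟨h1, _⟩ | ⟨h1, _⟩
    · rw [h1]
      have : (0:ℝ) ≤ max 0 (1 - Real.exp (ε + Real.log (f t).toReal)) := le_max_left _ _
      linarith
    · rw [h1]
      have : (0:ℝ) ≤ max 0 (1 - Real.exp (ε - Real.log (f t).toReal)) := le_max_left _ _
      have h2 : ε - -Real.log (f t).toReal = ε + Real.log (f t).toReal := by ring
      rw [h2]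
      linarith
  -- Lebesgue decomposition
  obtain ⟨s, hs, hμs_s, hQ_sc⟩ := MeasureTheory.Measure.mutuallySingular_singularPart P Q
  have hdec : P = P.singularPart Q + Q.withDensity f :=
    MeasureTheory.Measure.haveLebesgueDecomposition_add P Q
  have hae : ∀ᵐ t ∂Q, f t < ∞ := MeasureTheory.Measure.rnDeriv_lt_top P Q
  -- Claim 1 : singular mass + excess integral ≤ δ
  have claim1 : P.singularPart Q Set.univ + ∫⁻ t, (f t - c) ∂Q ≤ ENNReal.ofReal δ := by
    set E : Set Θ := {t | c < f t} with hEdef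
    have hE : MeasurableSet E := measurableSet_lt measurable_const hfm
    have h2 : ∫⁻ t, (f t - c) ∂Q = ∫⁻ t in E, (f t - c) ∂Q := by
      rw [← MeasureTheory.lintegral_indicator hE]
      apply MeasureTheory.lintegral_congr
      intro t
      by_cases htE : t ∈ E
      · rw [Set.indicator_of_mem htE]
      · rw [Set.indicator_of_notMem htE]
        exact tsub_eq_zero_of_le (not_lt.mp htE)
    have hQE_ne : c * Q E ≠ ∞ := ENNReal.mul_ne_top hc_ne_top (MeasureTheory.measure_ne_top Q E)
    rw [← ENNReal.add_le_add_iff_right hQE_ne]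
    have h3 : ∫⁻ t in E, (f t - c) ∂Q + c * Q E = ∫⁻ t in E, f t ∂Q := by
      rw [← MeasureTheory.setLIntegral_const E c,
        ← MeasureTheory.lintegral_add_right _ measurable_const]
      refine MeasureTheory.setLIntegral_congr_fun hE (fun t ht => ?_)
      exact tsub_add_cancel_of_le (le_of_lt ht)
    have h4 : ∫⁻ t in E, f t ∂Q = Q.withDensity f E :=
      (MeasureTheory.withDensity_apply f hE).symm
    have h5 : P (E ∪ sᶜ) = P.singularPart Q Set.univ + Q.withDensity f E := by
      conv_lhs => rw [hdec]
      rw [MeasureTheory.Measure.add_apply]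
      congr 1
      · apply le_antisymm (MeasureTheory.measure_mono (Set.subset_univ _))
        have hsub : (Set.univ : Set Θ) ⊆ (E ∪ sᶜ) ∪ s := by
          intro t _
          by_cases h : t ∈ s
          · exact Or.inr h
          · exact Or.inl (Or.inr h)
        calc P.singularPart Q Set.univ ≤ P.singularPart Q ((E ∪ sᶜ) ∪ s) :=
              MeasureTheory.measure_mono hsub
          _ ≤ P.singularPart Q (E ∪ sᶜ) + P.singularPart Q s := MeasureTheory.measure_union_le _ _
          _ = P.singularPart Q (E ∪ sᶜ) := by rw [hμs_s, add_zero]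
      · apply le_antisymm
        · have hwdsc : Q.withDensity f sᶜ = 0 :=
            MeasureTheory.withDensity_absolutelyContinuous Q f hQ_sc
          calc Q.withDensity f (E ∪ sᶜ) ≤ Q.withDensity f E + Q.withDensity f sᶜ :=
                MeasureTheory.measure_union_le _ _
            _ = Q.withDensity f E := by rw [hwdsc, add_zero]
        · exact MeasureTheory.measure_mono Set.subset_union_left
    have h6 : Q (E ∪ sᶜ) = Q E := by
      apply le_antisymm
      · calc Q (E ∪ sᶜ) ≤ Q E + Q sᶜ := MeasureTheory.measure_union_le _ _
          _ = Q E := by rw [hQ_sc, add_zero]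
      · exact MeasureTheory.measure_mono Set.subset_union_left
    rw [h2, add_assoc, h3, h4, ← h5]
    calc P (E ∪ sᶜ) ≤ c * Q (E ∪ sᶜ) + ENNReal.ofReal δ := H1 _ (hE.union hs.compl)
      _ = ENNReal.ofReal δ + c * Q E := by rw [h6, add_comm]
  -- Claim 2 : reverse hockey stick ≤ δ
  have claim2 : ∫⁻ t, ((1:ℝ≥0∞) - c * f t) ∂Q ≤ ENNReal.ofReal δ := by
    set F : Set Θ := s ∩ {t | c * f t < 1} with hFdef
    have hF : MeasurableSet F := hs.inter (measurableSet_lt (hfm.const_mul c) measurable_const)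
    have hsae : ∀ᵐ t ∂Q, t ∈ s := by
      rw [MeasureTheory.ae_iff]
      exact hQ_sc
    have hind : (fun t => (1:ℝ≥0∞) - c * f t) =ᵐ[Q] F.indicator (fun t => 1 - c * f t) := by
      filter_upwards [hsae] with t hts
      by_cases h : c * f t < 1
      · rw [Set.indicator_of_mem (Set.mem_inter hts h)]
      · rw [Set.indicator_of_notMem (fun hmem => h hmem.2)]
        exact tsub_eq_zero_of_le (not_lt.mp h)
    rw [MeasureTheory.lintegral_congr_ae hind, MeasureTheory.lintegral_indicator hF]
    have hwdle : Q.withDensity f F ≤ P F := by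
      conv_rhs => rw [hdec]
      rw [MeasureTheory.Measure.add_apply]
      exact le_add_self
    have hwdF_ne : c * Q.withDensity f F ≠ ∞ :=
      ENNReal.mul_ne_top hc_ne_top
        (lt_of_le_of_lt hwdle (MeasureTheory.measure_lt_top P F)).ne
    rw [← ENNReal.add_le_add_iff_right hwdF_ne]
    have h3 : ∫⁻ t in F, ((1:ℝ≥0∞) - c * f t) ∂Q + c * Q.withDensity f F = Q F := by
      rw [MeasureTheory.withDensity_apply f hF, ← MeasureTheory.lintegral_const_mul c hfm,
        ← MeasureTheory.lintegral_add_right _ (hfm.const_mul c)]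
      rw [MeasureTheory.setLIntegral_congr_fun hF
        (fun t ht => tsub_add_cancel_of_le (le_of_lt ht.2))]
      exact MeasureTheory.setLIntegral_one F
    rw [h3]
    have hμsF : P.singularPart Q F = 0 :=
      MeasureTheory.measure_mono_null Set.inter_subset_left hμs_s
    have hPF : P F = Q.withDensity f F := by
      conv_lhs => rw [hdec]
      rw [MeasureTheory.Measure.add_apply, hμsF, zero_add]
    calc Q F ≤ c * P F + ENNReal.ofReal δ := H2 F hF
      _ = ENNReal.ofReal δ + c * Q.withDensity f F := by rw [hPF, add_comm]
  -- a.e. identification of the two products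
  have hfg1 : (fun t => f t * ENNReal.ofReal (max 0 (1 - Real.exp (ε - Real.log (f t).toReal))))
      =ᵐ[Q] fun t => f t - c := by
    filter_upwards [hae] with t ht
    have hr0 : (0:ℝ) ≤ (f t).toReal := ENNReal.toReal_nonneg
    have hft : ENNReal.ofReal (f t).toReal = f t := ENNReal.ofReal_toReal ht.ne
    calc f t * ENNReal.ofReal (max 0 (1 - Real.exp (ε - Real.log (f t).toReal)))
        = ENNReal.ofReal (f t).toReal
          * ENNReal.ofReal (max 0 (1 - Real.exp (ε - Real.log (f t).toReal))) := by rw [hft]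
      _ = ENNReal.ofReal (max 0 (1 - Real.exp (ε - Real.log (f t).toReal)) * (f t).toReal) := by
          rw [← ENNReal.ofReal_mul hr0, mul_comm]
      _ = ENNReal.ofReal (max 0 ((f t).toReal - Real.exp ε)) := by rw [plrv_real1 ε _ hεnn hr0]
      _ = ENNReal.ofReal ((f t).toReal - Real.exp ε) := plrv_ofReal_max0 _
      _ = ENNReal.ofReal (f t).toReal - c := ENNReal.ofReal_sub _ (Real.exp_pos ε).le
      _ = f t - c := by rw [hft]
  have hfg2 : ∀ᵐ t ∂Q,
      f t * ENNReal.ofReal (max 0 (1 - Real.exp (ε + Real.log (f t).toReal)))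
        ≤ ENNReal.ofReal (Real.exp (-ε)) * ((1:ℝ≥0∞) - c * f t) := by
    filter_upwards [hae] with t ht
    have hr0 : (0:ℝ) ≤ (f t).toReal := ENNReal.toReal_nonneg
    have hft : ENNReal.ofReal (f t).toReal = f t := ENNReal.ofReal_toReal ht.ne
    have hkey : ENNReal.ofReal (max 0 (1 - Real.exp ε * (f t).toReal))
        = (1:ℝ≥0∞) - c * f t := by
      rw [plrv_ofReal_max0]
      rcases le_total (Real.exp ε * (f t).toReal) 1 with h | h
      · rw [ENNReal.ofReal_sub _ (by positivity), ENNReal.ofReal_one,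
          ENNReal.ofReal_mul (Real.exp_pos ε).le, hft]
      · have h1 : (1:ℝ≥0∞) ≤ c * f t := by
          rw [← hft, ← ENNReal.ofReal_mul (Real.exp_pos ε).le]
          exact ENNReal.one_le_ofReal.mpr h
        rw [ENNReal.ofReal_of_nonpos (by linarith), tsub_eq_zero_of_le h1]
    calc f t * ENNReal.ofReal (max 0 (1 - Real.exp (ε + Real.log (f t).toReal)))
        = ENNReal.ofReal (f t).toReal
          * ENNReal.ofReal (max 0 (1 - Real.exp (ε + Real.log (f t).toReal))) := by rw [hft]
      _ = ENNReal.ofReal (max 0 (1 - Real.exp (ε + Real.log (f t).toReal)) * (f t).toReal) := by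
          rw [← ENNReal.ofReal_mul hr0, mul_comm]
      _ ≤ ENNReal.ofReal (Real.exp (-ε) * max 0 (1 - Real.exp ε * (f t).toReal)) :=
          ENNReal.ofReal_le_ofReal (plrv_real2 ε _ hεnn hr0)
      _ = ENNReal.ofReal (Real.exp (-ε)) * ENNReal.ofReal (max 0 (1 - Real.exp ε * (f t).toReal)) :=
          ENNReal.ofReal_mul (Real.exp_pos (-ε)).le
      _ = ENNReal.ofReal (Real.exp (-ε)) * ((1:ℝ≥0∞) - c * f t) := by rw [hkey]
  -- the main lintegral bound
  have key : ∫⁻ t, ENNReal.ofReal (max 0 (1 - Real.exp (ε - |Real.log (f t).toReal|))) ∂P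
      ≤ ENNReal.ofReal ((1 + Real.exp (-ε)) * δ) := by
    have hsplitP : ∫⁻ t, ENNReal.ofReal (max 0 (1 - Real.exp (ε - |Real.log (f t).toReal|))) ∂P
        = ∫⁻ t, ENNReal.ofReal (max 0 (1 - Real.exp (ε - |Real.log (f t).toReal|)))
            ∂(P.singularPart Q)
          + ∫⁻ t, ENNReal.ofReal (max 0 (1 - Real.exp (ε - |Real.log (f t).toReal|)))
            ∂(Q.withDensity f) := by
      conv_lhs => rw [hdec]
      exact MeasureTheory.lintegral_add_measure _ _ _
    have hsing : ∫⁻ t, ENNReal.ofReal (max 0 (1 - Real.exp (ε - |Real.log (f t).toReal|)))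
        ∂(P.singularPart Q) ≤ P.singularPart Q Set.univ := by
      calc ∫⁻ t, ENNReal.ofReal (max 0 (1 - Real.exp (ε - |Real.log (f t).toReal|)))
          ∂(P.singularPart Q)
          ≤ ∫⁻ _, 1 ∂(P.singularPart Q) :=
            MeasureTheory.lintegral_mono fun t => ENNReal.ofReal_le_one.mpr (hg_le_one t)
        _ = P.singularPart Q Set.univ := MeasureTheory.lintegral_one
    have hwd : ∫⁻ t, ENNReal.ofReal (max 0 (1 - Real.exp (ε - |Real.log (f t).toReal|)))
        ∂(Q.withDensity f)
        = ∫⁻ t, f t * ENNReal.ofReal (max 0 (1 - Real.exp (ε - |Real.log (f t).toReal|))) ∂Q := by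
      rw [MeasureTheory.lintegral_withDensity_eq_lintegral_mul Q hfm hgm.ennreal_ofReal]
      rfl
    have hsplit2 : ∫⁻ t, f t
          * ENNReal.ofReal (max 0 (1 - Real.exp (ε - |Real.log (f t).toReal|))) ∂Q
        ≤ ∫⁻ t, f t * ENNReal.ofReal (max 0 (1 - Real.exp (ε - Real.log (f t).toReal))) ∂Q
          + ∫⁻ t, f t * ENNReal.ofReal (max 0 (1 - Real.exp (ε + Real.log (f t).toReal))) ∂Q := by
      rw [← MeasureTheory.lintegral_add_left (show Measurable fun t => f t * ENNReal.ofReal (max 0 (1 - Real.exp (ε - Real.log (f t).toReal))) from hfm.mul hg1m.ennreal_ofReal)]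
      refine MeasureTheory.lintegral_mono fun t => ?_
      have hofle : ENNReal.ofReal (max 0 (1 - Real.exp (ε - |Real.log (f t).toReal|)))
          ≤ ENNReal.ofReal (max 0 (1 - Real.exp (ε - Real.log (f t).toReal)))
            + ENNReal.ofReal (max 0 (1 - Real.exp (ε + Real.log (f t).toReal))) := by
        rw [← ENNReal.ofReal_add (le_max_left _ _) (le_max_left _ _)]
        exact ENNReal.ofReal_le_ofReal (hg_split t)
      calc f t * ENNReal.ofReal (max 0 (1 - Real.exp (ε - |Real.log (f t).toReal|)))
          ≤ f t * (ENNReal.ofReal (max 0 (1 - Real.exp (ε - Real.log (f t).toReal)))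
            + ENNReal.ofReal (max 0 (1 - Real.exp (ε + Real.log (f t).toReal)))) :=
            mul_le_mul_right hofle _
        _ = _ := mul_add _ _ _
    have hterm1 : P.singularPart Q Set.univ
        + ∫⁻ t, f t * ENNReal.ofReal (max 0 (1 - Real.exp (ε - Real.log (f t).toReal))) ∂Q
        ≤ ENNReal.ofReal δ := by
      rw [MeasureTheory.lintegral_congr_ae hfg1]
      exact claim1
    have hterm2 : ∫⁻ t, f t
          * ENNReal.ofReal (max 0 (1 - Real.exp (ε + Real.log (f t).toReal))) ∂Q
        ≤ ENNReal.ofReal (Real.exp (-ε) * δ) := by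
      calc ∫⁻ t, f t * ENNReal.ofReal (max 0 (1 - Real.exp (ε + Real.log (f t).toReal))) ∂Q
          ≤ ∫⁻ t, ENNReal.ofReal (Real.exp (-ε)) * ((1:ℝ≥0∞) - c * f t) ∂Q :=
            MeasureTheory.lintegral_mono_ae hfg2
        _ = ENNReal.ofReal (Real.exp (-ε)) * ∫⁻ t, ((1:ℝ≥0∞) - c * f t) ∂Q :=
            MeasureTheory.lintegral_const_mul _ (measurable_const.sub (hfm.const_mul c))
        _ ≤ ENNReal.ofReal (Real.exp (-ε)) * ENNReal.ofReal δ := mul_le_mul_right claim2 _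
        _ = ENNReal.ofReal (Real.exp (-ε) * δ) := (ENNReal.ofReal_mul (Real.exp_pos (-ε)).le).symm
    calc ∫⁻ t, ENNReal.ofReal (max 0 (1 - Real.exp (ε - |Real.log (f t).toReal|))) ∂P
        ≤ P.singularPart Q Set.univ
          + (∫⁻ t, f t * ENNReal.ofReal (max 0 (1 - Real.exp (ε - Real.log (f t).toReal))) ∂Q
            + ∫⁻ t, f t * ENNReal.ofReal (max 0 (1 - Real.exp (ε + Real.log (f t).toReal))) ∂Q) := by
          rw [hsplitP]
          refine add_le_add hsing ?_
          rw [hwd]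
          exact hsplit2
      _ ≤ ENNReal.ofReal δ + ENNReal.ofReal (Real.exp (-ε) * δ) := by
          rw [← add_assoc]
          exact add_le_add hterm1 hterm2
      _ = ENNReal.ofReal ((1 + Real.exp (-ε)) * δ) := by
          rw [← ENNReal.ofReal_add hδ (by positivity)]
          congr 1
          ring
  rw [MeasureTheory.integral_eq_lintegral_of_nonneg_ae
    (MeasureTheory.ae_of_all _ hg_nonneg) hgm.aestronglyMeasurable]
  exact ENNReal.toReal_le_of_le_ofReal (by positivity) key

end PLRVAux

/-- **Proposition (Hockey-stick control of the two-sided PLRV tail).** If `A` is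
`(ε,δ)`-DP, then for any two adjacent datasets `D ~ D'`:
`E[(1 − e^{ε − |PLRV_{D,D'}^A(A(D))|})_+] ≤ (1 + e^{−ε}) δ`. -/
theorem plrv_two_sided_hockey_stick
    {𝒳 Θ : Type*} [MeasurableSpace Θ]
    (A : Multiset 𝒳 → Measure Θ) (hA : ∀ d, IsProbabilityMeasure (A d))
    (ε δ : ℝ) (hε : 0 < ε) (hδ : 0 ≤ δ)
    (hDP : ApproxDP A AddRemoveAdj ε δ)
    (D D' : Multiset 𝒳) (hadj : AddRemoveAdj D D') :
    (∫ t, max 0 (1 - Real.exp (ε - |PLRV A D D' t|)) ∂(A D)) ≤ (1 + Real.exp (-ε)) * δ := by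
  haveI := hA D
  haveI := hA D'
  have hadj' : AddRemoveAdj D' D := by obtain ⟨x, hx⟩ := hadj; exact ⟨x, hx.symm⟩
  have h := plrv_hockey_aux (A D) (A D') ε δ hε hδ
    (fun E hE => hDP D D' hadj E hE) (fun E hE => hDP D' D hadj' E hE)
  simpa [PLRV] using h
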